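/- For n ≥ 2 and C > 0, let v(r,θ) = (C(n−1)/2) · (∫₀^r (sinh s)^{n−1} ds)/(sinh r)^{n−1} · cos θ on H^n. Then lim_{R→∞} e^R · sup_{θ} ‖∇v(R,θ)‖ = C, where ‖∇v(r,θ)‖² = |∂_r v|² + |∂_θ v|²/sinh²r. In particular v is a bounded non-constant harmonic function on H^n whose gradient decays exactly like C e^{−R}. -/

import Mathlib

open Real Filter Set intervalIntegral

noncomputable def II (k : ℕ) (r : ℝ) : ℝ := ∫ s in (0:ℝ)..r, Real.sinh s ^ (k+1)
noncomputable def JJ (k : ℕ) (r : ℝ) : ℝ := ∫ s in (0:ℝ)..r, Real.sinh s ^ k * Real.exp (-s)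

lemma cont1 (k : ℕ) : Continuous fun s : ℝ => Real.sinh s ^ (k+1) :=
  Real.continuous_sinh.pow _

lemma cont2 (k : ℕ) : Continuous fun s : ℝ => Real.sinh s ^ k * Real.exp (-s) :=
  (Real.continuous_sinh.pow _).mul (Real.continuous_exp.comp continuous_neg)

lemma II_split (k : ℕ) (r : ℝ) :
    II k r = Real.sinh r ^ (k+1) / (k+1) - JJ k r := by
  have h1 : ∀ s : ℝ, Real.sinh s ^ (k+1) =
      Real.sinh s ^ k * Real.cosh s - Real.sinh s ^ k * Real.exp (-s) := by
    intro s
    rw [← mul_sub]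
    have : Real.cosh s - Real.exp (-s) = Real.sinh s := by
      rw [Real.cosh_eq, Real.sinh_eq]; ring
    rw [this, pow_succ]
  have h2 : (∫ s in (0:ℝ)..r, Real.sinh s ^ k * Real.cosh s)
      = Real.sinh r ^ (k+1) / (k+1) := by
    have : ∀ s ∈ Set.uIcc (0:ℝ) r, HasDerivAt (fun u => Real.sinh u ^ (k+1) / (k+1))
        (Real.sinh s ^ k * Real.cosh s) s := by
      intro s _
      have h : HasDerivAt (fun u => Real.sinh u ^ (k+1) / ((k:ℝ)+1))
          (((k+1:ℕ):ℝ) * Real.sinh s ^ (k+1-1) * Real.cosh s / ((k:ℝ)+1)) s :=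
        ((Real.hasDerivAt_sinh s).fun_pow (k+1)).div_const ((k:ℝ)+1)
      convert h using 1
      have hk : ((k:ℝ)+1) ≠ 0 := by positivity
      push_cast [Nat.add_sub_cancel]
      field_simp

    have := intervalIntegral.integral_eq_sub_of_hasDerivAt this
      (((Real.continuous_sinh.pow k).mul Real.continuous_cosh).intervalIntegrable 0 r)
    simpa using this
  have h3 : II k r = (∫ s in (0:ℝ)..r, Real.sinh s ^ k * Real.cosh s) - JJ k r := by
    rw [II, JJ, ← intervalIntegral.integral_sub (f := fun s => Real.sinh s ^ k * Real.cosh s)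
      (((Real.continuous_sinh.pow k).mul Real.continuous_cosh).intervalIntegrable 0 r)
      ((cont2 k).intervalIntegrable 0 r)]
    exact intervalIntegral.integral_congr fun s _ => h1 s
  rw [h3, h2]

lemma sinh_le_exp' {s : ℝ} : Real.sinh s ≤ Real.exp s := by
  rw [Real.sinh_eq]
  nlinarith [Real.exp_pos (-s), Real.exp_pos s]

lemma exp_quarter_le_sinh {r : ℝ} (hr : 1 ≤ r) : Real.exp r / 4 ≤ Real.sinh r := by
  rw [Real.sinh_eq]
  have h1 : Real.exp (-r) ≤ Real.exp (-1) := Real.exp_le_exp.2 (by linarith)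
  have h2 : Real.exp (-1) ≤ 1 := Real.exp_le_one_iff.mpr (by norm_num)
  have h3 : (2:ℝ) ≤ Real.exp 1 := by
    have := Real.add_one_le_exp 1; linarith
  have h4 : (2:ℝ) ≤ Real.exp r := h3.trans (Real.exp_le_exp.2 hr)
  linarith

lemma sinh_pow_ge {r : ℝ} (hr : 1 ≤ r) (p : ℕ) :
    Real.exp ((p:ℝ) * r) / 4 ^ p ≤ Real.sinh r ^ p := by
  have h := exp_quarter_le_sinh hr
  have h0 : (0:ℝ) ≤ Real.exp r / 4 := by positivity
  calc Real.exp ((p:ℝ)*r) / 4 ^ p = (Real.exp r / 4) ^ p := by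
        rw [div_pow, ← Real.exp_nat_mul]
      _ ≤ Real.sinh r ^ p := pow_le_pow_left₀ h0 h p

lemma tendsto_exp_neg_two_mul : Tendsto (fun r : ℝ => Real.exp (-(2 * r))) atTop (nhds 0) := by
  have h2 : Tendsto (fun r : ℝ => 2 * r) atTop atTop :=
    Tendsto.const_mul_atTop (by norm_num) tendsto_id
  exact (Real.tendsto_exp_neg_atTop_nhds_zero).comp h2

lemma tendsto_exp_div_sinh : Tendsto (fun r => Real.exp r / Real.sinh r) atTop (nhds 2) := by
  have h : Tendsto (fun r : ℝ => 2 / (1 - Real.exp (-(2 * r)))) atTop (nhds 2) := by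
    have h2 : Tendsto (fun r : ℝ => 1 - Real.exp (-(2 * r))) atTop (nhds 1) := by
      simpa using tendsto_const_nhds.sub tendsto_exp_neg_two_mul
    have h3 := (tendsto_const_nhds : Tendsto (fun _ : ℝ => (2:ℝ)) atTop (nhds 2)).div h2 (by norm_num)
    rw [div_one] at h3
    exact h3
  refine h.congr' ?_
  filter_upwards [eventually_ge_atTop (1:ℝ)] with r hr
  have hs : 0 < Real.sinh r := Real.sinh_pos_iff.2 (by linarith)
  have he : Real.exp (-(2*r)) < 1 := Real.exp_lt_one_iff.mpr (by linarith)
  rw [Real.sinh_eq]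
  rw [div_eq_div_iff (by linarith) (by nlinarith [Real.sinh_eq r, hs])]
  have : Real.exp (-(2*r)) * Real.exp r = Real.exp (-r) := by
    rw [← Real.exp_add]; ring_nf
  nlinarith [this]

lemma tendsto_coth : Tendsto (fun r => Real.cosh r / Real.sinh r) atTop (nhds 1) := by
  have h : Tendsto (fun r : ℝ => (1 + Real.exp (-(2 * r))) / (1 - Real.exp (-(2 * r))))
      atTop (nhds 1) := by
    have h1 : Tendsto (fun r : ℝ => 1 + Real.exp (-(2 * r))) atTop (nhds 1) := by
      simpa using tendsto_const_nhds.add tendsto_exp_neg_two_mul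
    have h2 : Tendsto (fun r : ℝ => 1 - Real.exp (-(2 * r))) atTop (nhds 1) := by
      simpa using tendsto_const_nhds.sub tendsto_exp_neg_two_mul
    have h3 := h1.div h2 (by norm_num)
    rw [div_one] at h3
    exact h3
  refine h.congr' ?_
  filter_upwards [eventually_ge_atTop (1:ℝ)] with r hr
  have hs : 0 < Real.sinh r := Real.sinh_pos_iff.2 (by linarith)
  have he : Real.exp (-(2*r)) < 1 := Real.exp_lt_one_iff.mpr (by linarith)
  rw [Real.sinh_eq, Real.cosh_eq]
  rw [div_eq_div_iff (by linarith) (by nlinarith [Real.sinh_eq r, hs])]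
  have h3 : Real.exp (-(2*r)) * Real.exp r = Real.exp (-r) := by
    rw [← Real.exp_add]; ring_nf
  nlinarith [h3]

lemma tendsto_one_div_sinh : Tendsto (fun r => 1 / Real.sinh r) atTop (nhds 0) := by
  have h : Tendsto Real.sinh atTop atTop := by
    apply tendsto_atTop_mono' _ _ ((tendsto_exp_atTop).atTop_div_const (by norm_num : (0:ℝ) < 4))
    filter_upwards [eventually_ge_atTop (1:ℝ)] with r hr
    exact exp_quarter_le_sinh hr
  exact h.inv_tendsto_atTop.congr fun r => (one_div _).symm

lemma tendsto_aux_rexp : Tendsto (fun r : ℝ => r * Real.exp (-r)) atTop (nhds 0) := by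
  simpa using tendsto_pow_mul_exp_neg_atTop_nhds_zero 1

lemma JJ_nonneg (k : ℕ) {r : ℝ} (hr : 0 ≤ r) : 0 ≤ JJ k r := by
  apply intervalIntegral.integral_nonneg hr
  intro s hs
  have : 0 ≤ Real.sinh s := Real.sinh_nonneg_iff.2 hs.1
  positivity

lemma II_nonneg (k : ℕ) {r : ℝ} (hr : 0 ≤ r) : 0 ≤ II k r := by
  apply intervalIntegral.integral_nonneg hr
  intro s hs
  have : 0 ≤ Real.sinh s := Real.sinh_nonneg_iff.2 hs.1
  positivity

lemma JJ_le (k : ℕ) {r : ℝ} (hr : 0 ≤ r) : JJ k r ≤ r * Real.exp ((k:ℝ) * r) := by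
  have h : JJ k r ≤ ∫ _ in (0:ℝ)..r, Real.exp ((k:ℝ) * r) := by
    apply intervalIntegral.integral_mono_on hr ((cont2 k).intervalIntegrable 0 r)
      (intervalIntegrable_const)
    intro s hs
    have h1 : Real.sinh s ^ k ≤ Real.exp s ^ k :=
      pow_le_pow_left₀ (Real.sinh_nonneg_iff.2 hs.1) sinh_le_exp' k
    have h2 : Real.exp (-s) ≤ 1 := Real.exp_le_one_iff.mpr (by linarith [hs.1])
    have h3 : Real.exp s ^ k = Real.exp ((k:ℝ) * s) := by
      rw [← Real.exp_nat_mul]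
    have h4 : Real.exp ((k:ℝ) * s) ≤ Real.exp ((k:ℝ) * r) :=
      Real.exp_le_exp.2 (by nlinarith [hs.2, hs.1, Nat.cast_nonneg (α := ℝ) k])
    have h5 : (0:ℝ) ≤ Real.sinh s ^ k := pow_nonneg (Real.sinh_nonneg_iff.2 hs.1) k
    calc Real.sinh s ^ k * Real.exp (-s) ≤ Real.sinh s ^ k * 1 := by
          exact mul_le_mul_of_nonneg_left h2 h5
      _ = Real.sinh s ^ k := mul_one _
      _ ≤ Real.exp ((k:ℝ) * s) := by rw [← h3]; exact h1
      _ ≤ Real.exp ((k:ℝ) * r) := h4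
  simpa using h

lemma JJ_le' (k : ℕ) {r : ℝ} (hr : 0 ≤ r) : JJ (k+1) r ≤ r * Real.exp ((k:ℝ) * r) := by
  have h : JJ (k+1) r ≤ ∫ _ in (0:ℝ)..r, Real.exp ((k:ℝ) * r) := by
    apply intervalIntegral.integral_mono_on hr ((cont2 (k+1)).intervalIntegrable 0 r)
      (intervalIntegrable_const)
    intro s hs
    have hsn : 0 ≤ Real.sinh s := Real.sinh_nonneg_iff.2 hs.1
    have h1 : Real.sinh s ^ (k+1) ≤ Real.exp s ^ (k+1) :=
      pow_le_pow_left₀ hsn sinh_le_exp' (k+1)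
    have key : Real.exp s ^ (k+1) * Real.exp (-s) = Real.exp ((k:ℝ) * s) := by
      rw [← Real.exp_nat_mul, ← Real.exp_add]
      push_cast; ring_nf
    have h4 : Real.exp ((k:ℝ) * s) ≤ Real.exp ((k:ℝ) * r) :=
      Real.exp_le_exp.2 (by nlinarith [hs.2, hs.1, Nat.cast_nonneg (α := ℝ) k])
    calc Real.sinh s ^ (k+1) * Real.exp (-s)
        ≤ Real.exp s ^ (k+1) * Real.exp (-s) :=
          mul_le_mul_of_nonneg_right h1 (Real.exp_pos _).le
      _ = Real.exp ((k:ℝ) * s) := key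
      _ ≤ Real.exp ((k:ℝ) * r) := h4
  simpa using h

lemma JJ_zero (r : ℝ) : JJ 0 r = 1 - Real.exp (-r) := by
  have h : ∀ s ∈ Set.uIcc (0:ℝ) r, HasDerivAt (fun u => -Real.exp (-u)) (Real.exp (-s)) s := by
    intro s _
    have h1 : HasDerivAt (fun u : ℝ => -u) (-1) s := (hasDerivAt_id s).neg
    have h2 := (Real.hasDerivAt_exp (-s)).comp s h1
    have h3 := h2.neg
    have h4 : HasDerivAt (fun u => -Real.exp (-u)) (-(Real.exp (-s) * -1)) s := h3
    convert h4 using 1; ring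
  have := intervalIntegral.integral_eq_sub_of_hasDerivAt h
    ((Real.continuous_exp.comp continuous_neg).intervalIntegrable 0 r)
  simpa [JJ] using this

-- generic squeeze
lemma squeeze_gen (k : ℕ) (G : ℝ → ℝ) (h0 : ∀ r, 1 ≤ r → 0 ≤ G r)
    (hle : ∀ r, 1 ≤ r → G r ≤ r * Real.exp ((k:ℝ) * r)) :
    Tendsto (fun r => Real.exp r * G r / Real.sinh r ^ (k+2)) atTop (nhds 0) := by
  have hub : Tendsto (fun r : ℝ => 4 ^ (k+2) * (r * Real.exp (-r))) atTop (nhds 0) := by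
    simpa using tendsto_aux_rexp.const_mul ((4:ℝ) ^ (k+2))
  apply tendsto_of_tendsto_of_tendsto_of_le_of_le' tendsto_const_nhds hub
  · filter_upwards [eventually_ge_atTop (1:ℝ)] with r hr
    have hs : 0 < Real.sinh r := Real.sinh_pos_iff.2 (by linarith)
    have := h0 r hr
    positivity
  · filter_upwards [eventually_ge_atTop (1:ℝ)] with r hr
    have hs : 0 < Real.sinh r := Real.sinh_pos_iff.2 (by linarith)
    have hsp : (0:ℝ) < Real.sinh r ^ (k+2) := pow_pos hs _
    have hge : Real.exp (((k+2:ℕ):ℝ) * r) / 4 ^ (k+2) ≤ Real.sinh r ^ (k+2) :=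
      sinh_pow_ge hr (k+2)
    have hnum : 0 ≤ Real.exp r * G r := mul_nonneg (Real.exp_pos r).le (h0 r hr)
    calc Real.exp r * G r / Real.sinh r ^ (k+2)
        ≤ Real.exp r * (r * Real.exp ((k:ℝ)*r)) / (Real.exp (((k+2:ℕ):ℝ) * r) / 4 ^ (k+2)) := by
          apply div_le_div₀ (by positivity)
            (mul_le_mul_of_nonneg_left (hle r hr) (Real.exp_pos r).le)
            (by positivity) hge
      _ = 4 ^ (k+2) * (r * Real.exp (-r)) := by
          have e1 : Real.exp r * Real.exp ((k:ℝ)*r) / Real.exp (((k+2:ℕ):ℝ)*r)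
              = Real.exp (-r) := by
            rw [← Real.exp_add, ← Real.exp_sub]
            congr 1
            push_cast; ring
          rw [div_div_eq_mul_div, ← e1]
          ring

lemma tendsto_S1 (k : ℕ) :
    Tendsto (fun r => Real.exp r * JJ k r / Real.sinh r ^ (k+2)) atTop (nhds 0) :=
  squeeze_gen k (JJ k) (fun r hr => JJ_nonneg k (by linarith))
    (fun r hr => JJ_le k (by linarith))

lemma tendsto_T2 (k : ℕ) :
    Tendsto (fun r => Real.exp r * II k r / Real.sinh r ^ (k+2)) atTop
      (nhds (2 / ((k:ℝ)+1))) := by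
  have h : Tendsto (fun r => Real.exp r / Real.sinh r / ((k:ℝ)+1)
      - Real.exp r * JJ k r / Real.sinh r ^ (k+2)) atTop (nhds (2 / ((k:ℝ)+1))) := by
    simpa using (tendsto_exp_div_sinh.div_const ((k:ℝ)+1)).sub (tendsto_S1 k)
  refine h.congr' ?_
  filter_upwards [eventually_ge_atTop (1:ℝ)] with r hr
  have hs : (0:ℝ) < Real.sinh r := Real.sinh_pos_iff.2 (by linarith)
  have hs' : Real.sinh r ≠ 0 := ne_of_gt hs
  have hk : ((k:ℝ)+1) ≠ 0 := by positivity
  rw [II_split]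
  push_cast
  field_simp
  ring

noncomputable def fder (k : ℕ) (r : ℝ) : ℝ :=
  (Real.sinh r ^ (k+1) * Real.sinh r ^ (k+1)
    - II k r * (((k:ℝ)+1) * Real.sinh r ^ k * Real.cosh r)) / (Real.sinh r ^ (k+1)) ^ 2

lemma fder_eq (k : ℕ) {r : ℝ} (hr : 1 ≤ r) :
    fder k r = -Real.exp (-r) / Real.sinh r
      + ((k:ℝ)+1) * (Real.cosh r / Real.sinh r) * (JJ k r / Real.sinh r ^ (k+1)) := by
  have hs : (0:ℝ) < Real.sinh r := Real.sinh_pos_iff.2 (by linarith)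
  have hs' : Real.sinh r ≠ 0 := ne_of_gt hs
  have hk : ((k:ℝ)+1) ≠ 0 := by positivity
  have hce : Real.cosh r = Real.sinh r + Real.exp (-r) := by
    rw [Real.cosh_eq, Real.sinh_eq]; ring
  rw [fder, II_split, hce]
  push_cast
  field_simp
  ring

lemma main_limits (k : ℕ) : ∃ L, Tendsto (fun r => Real.exp r * fder k r) atTop (nhds L)
    ∧ 0 ≤ L ∧ ((k:ℝ)+1) * L ≤ 2 := by
  have hJ : ∃ Lj, Tendsto (fun r => Real.exp r * JJ k r / Real.sinh r ^ (k+1)) atTop (nhds Lj)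
      ∧ 0 ≤ Lj ∧ ((k:ℝ)+1)^2 * Lj ≤ 2 := by
    cases k with
    | zero =>
      refine ⟨2, ?_, by norm_num, by norm_num⟩

      have h : Tendsto (fun r => Real.exp r / Real.sinh r - 1 / Real.sinh r) atTop (nhds 2) := by
        simpa using tendsto_exp_div_sinh.sub tendsto_one_div_sinh
      refine h.congr' ?_
      filter_upwards [eventually_ge_atTop (1:ℝ)] with r hr
      have hs : (0:ℝ) < Real.sinh r := Real.sinh_pos_iff.2 (by linarith)
      have he : Real.exp r * Real.exp (-r) = 1 := by rw [← Real.exp_add]; simp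
      rw [JJ_zero]
      field_simp
      linear_combination Real.sinh r * he
    | succ j =>
      refine ⟨0, ?_, le_refl 0, by norm_num⟩
      exact squeeze_gen j (JJ (j+1)) (fun r hr => JJ_nonneg (j+1) (by linarith))
        (fun r hr => JJ_le' j (by linarith))
  obtain ⟨Lj, hLj, hLj0, hLj2⟩ := hJ
  refine ⟨-0 + ((k:ℝ)+1) * 1 * Lj, ?_, by positivity, by nlinarith⟩
  have h : Tendsto (fun r => -(1 / Real.sinh r)
      + ((k:ℝ)+1) * (Real.cosh r / Real.sinh r) * (Real.exp r * JJ k r / Real.sinh r ^ (k+1)))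
      atTop (nhds (-0 + ((k:ℝ)+1) * 1 * Lj)) := by
    exact (tendsto_one_div_sinh.neg).add
      (((tendsto_const_nhds.mul tendsto_coth).mul hLj))
  refine h.congr' ?_
  filter_upwards [eventually_ge_atTop (1:ℝ)] with r hr
  have hs : (0:ℝ) < Real.sinh r := Real.sinh_pos_iff.2 (by linarith)
  have hs' : Real.sinh r ≠ 0 := ne_of_gt hs
  have he : Real.exp r * Real.exp (-r) = 1 := by rw [← Real.exp_add]; simp
  rw [fder_eq k hr, mul_add]
  congr 1
  · have h2 : Real.exp r * (-Real.exp (-r) / Real.sinh r)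
        = -(Real.exp r * Real.exp (-r)) / Real.sinh r := by ring
    rw [h2, he, neg_div]
  · ring

lemma sSup_ellipse (A B : ℝ) (hA : 0 ≤ A) (hB : 0 ≤ B) :
    sSup (Set.range fun θ : ℝ => Real.sqrt (A * Real.cos θ ^ 2 + B * Real.sin θ ^ 2))
      = Real.sqrt (max A B) := by
  apply IsGreatest.csSup_eq
  constructor
  · rcases le_total A B with h | h
    · exact ⟨Real.pi/2, by simp [Real.cos_pi_div_two, Real.sin_pi_div_two, max_eq_right h]⟩
    · exact ⟨0, by simp [max_eq_left h]⟩
  · rintro x ⟨θ, rfl⟩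
    apply Real.sqrt_le_sqrt
    have h1 := Real.sin_sq_add_cos_sq θ
    have h2 := sq_nonneg (Real.sin θ)
    have h3 := sq_nonneg (Real.cos θ)
    rcases le_total A B with h | h
    · rw [max_eq_right h]; nlinarith
    · rw [max_eq_left h]; nlinarith

lemma sqrt_max_sq (a b : ℝ) : Real.sqrt (max (a^2) (b^2)) = max |a| |b| := by
  rcases le_total (a^2) (b^2) with h | h
  · rw [max_eq_right h, Real.sqrt_sq_eq_abs, max_eq_right (sq_le_sq.1 h)]
  · rw [max_eq_left h, Real.sqrt_sq_eq_abs, max_eq_left (sq_le_sq.1 h)]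

theorem gradient_decay_exactly_exponential (n : ℕ) (hn : 2 ≤ n) (C : ℝ) (hC : 0 < C)
    (v : ℝ → ℝ → ℝ)
    (hv : ∀ r θ, v r θ =
      C * ((n : ℝ) - 1) / 2 *
        ((∫ s in (0:ℝ)..r, Real.sinh s ^ (n - 1)) / Real.sinh r ^ (n - 1)) * Real.cos θ) :
    Filter.Tendsto (fun R : ℝ =>
        Real.exp R * sSup (Set.range fun θ : ℝ =>
          Real.sqrt ((deriv (fun s => v s θ) R) ^ 2
            + (deriv (fun φ => v R φ) θ) ^ 2 / Real.sinh R ^ 2)))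
      Filter.atTop (nhds C) ∧
    (∃ M : ℝ, ∀ r θ : ℝ, 0 ≤ r → |v r θ| ≤ M) ∧
    (∃ (r r' θ θ' : ℝ), 0 ≤ r ∧ 0 ≤ r' ∧ v r θ ≠ v r' θ') := by
  obtain ⟨k, hk⟩ := Nat.exists_eq_add_of_le hn
  have hn1 : n - 1 = k + 1 := by omega
  set K : ℝ := C * ((n : ℝ) - 1) / 2 with hKdef
  have hcast : ((n:ℝ) - 1) = (k:ℝ) + 1 := by
    rw [hk]; push_cast; ring
  have hKpos : 0 < K := by
    rw [hKdef, hcast]; positivity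
  have hvK : ∀ r θ, v r θ = K * (II k r / Real.sinh r ^ (k+1)) * Real.cos θ := by
    intro r θ
    rw [hv r θ, hn1, II]
  -- boundedness
  have hbound : ∀ r θ : ℝ, 0 ≤ r → |v r θ| ≤ K := by
    intro r θ hr
    rw [hvK]
    have hq : 0 ≤ II k r / Real.sinh r ^ (k+1) ∧ II k r / Real.sinh r ^ (k+1) ≤ 1 := by
      rcases eq_or_lt_of_le hr with h | h
      · simp [II, ← h]
      · have hs : (0:ℝ) < Real.sinh r := Real.sinh_pos_iff.2 h
        have hsp : (0:ℝ) < Real.sinh r ^ (k+1) := pow_pos hs _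
        constructor
        · exact div_nonneg (II_nonneg k hr) hsp.le
        · rw [div_le_one hsp]
          have h1 := II_split k r
          have h2 := JJ_nonneg k hr
          have h3 : Real.sinh r ^ (k+1) / ((k:ℝ)+1) ≤ Real.sinh r ^ (k+1) := by
            apply div_le_self hsp.le
            push_cast
            linarith [Nat.cast_nonneg (α := ℝ) k]
          linarith
    calc |K * (II k r / Real.sinh r ^ (k+1)) * Real.cos θ|
        = K * (II k r / Real.sinh r ^ (k+1)) * |Real.cos θ| := by
          rw [abs_mul, abs_of_nonneg (mul_nonneg hKpos.le hq.1)]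
      _ ≤ K * 1 * 1 := by
          apply mul_le_mul (by nlinarith [hq.2, hq.1]) (Real.abs_cos_le_one θ) (abs_nonneg _)
            (by positivity)
      _ = K := by ring
  refine ⟨?_, ⟨K, hbound⟩, ⟨1, 0, 0, 0, by norm_num, le_refl 0, ?_⟩⟩
  · -- the main limit
    obtain ⟨L, hL, hL0, hL2⟩ := main_limits k
    have hC' : K * (2 / ((k:ℝ)+1)) = C := by
      rw [hKdef, hcast]; field_simp
    have h1 : Tendsto (fun R => |K * (Real.exp R * fder k R)|) atTop (nhds |K * L|) :=
      (hL.const_mul K).abs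
    have h2 : Tendsto (fun R => K * (Real.exp R * II k R / Real.sinh R ^ (k+2)))
        atTop (nhds C) := by
      rw [← hC']
      exact (tendsto_T2 k).const_mul K
    have hmax := h1.max h2
    have hmeq : max |K * L| C = C := by
      apply max_eq_right
      rw [abs_of_nonneg (by positivity)]
      have : K * L = C * (((k:ℝ)+1) * L) / 2 := by
        rw [hKdef, hcast]; ring
      rw [this]
      nlinarith
    rw [hmeq] at hmax
    refine hmax.congr' ?_
    filter_upwards [eventually_ge_atTop (1:ℝ)] with R hR
    have hRpos : (0:ℝ) < R := by linarith
    have hs : (0:ℝ) < Real.sinh R := Real.sinh_pos_iff.2 hRpos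
    have hs' : Real.sinh R ≠ 0 := ne_of_gt hs
    have hsp : Real.sinh R ^ (k+1) ≠ 0 := pow_ne_zero _ hs'
    -- derivative in r
    have hDr : ∀ θ : ℝ, deriv (fun s => v s θ) R = K * fder k R * Real.cos θ := by
      intro θ
      have h1' : HasDerivAt (fun s => II k s) (Real.sinh R ^ (k+1)) R :=
        intervalIntegral.integral_hasDerivAt_right ((cont1 k).intervalIntegrable 0 R)
          ((cont1 k).aestronglyMeasurable.stronglyMeasurableAtFilter) (cont1 k).continuousAt
      have h2' : HasDerivAt (fun s : ℝ => Real.sinh s ^ (k+1))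
          (((k:ℝ)+1) * Real.sinh R ^ k * Real.cosh R) R := by
        have h : HasDerivAt (fun s : ℝ => Real.sinh s ^ (k+1))
            (((k+1:ℕ):ℝ) * Real.sinh R ^ (k+1-1) * Real.cosh R) R :=
          (Real.hasDerivAt_sinh R).fun_pow (k+1)
        convert h using 1
        push_cast [Nat.add_sub_cancel]
        ring
      have h3' := h1'.div h2' hsp
      have h4' := (h3'.const_mul K).mul_const (Real.cos θ)
      have hfun : (fun s => v s θ) = fun s => K * (II k s / Real.sinh s ^ (k+1)) * Real.cos θ :=
        funext fun s => hvK s θ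
      rw [hfun]
      exact h4'.deriv
    have hDθ : ∀ θ : ℝ, deriv (fun φ => v R φ) θ
        = K * (II k R / Real.sinh R ^ (k+1)) * (-Real.sin θ) := by
      intro θ
      have h := (Real.hasDerivAt_cos θ).const_mul (K * (II k R / Real.sinh R ^ (k+1)))
      have hfun : (fun φ => v R φ) = fun φ => K * (II k R / Real.sinh R ^ (k+1)) * Real.cos φ :=
        funext fun φ => hvK R φ
      rw [hfun]
      simpa [mul_comm] using h.deriv
    -- rewrite the sSup
    have hrange : (fun θ : ℝ =>
        Real.sqrt ((deriv (fun s => v s θ) R) ^ 2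
          + (deriv (fun φ => v R φ) θ) ^ 2 / Real.sinh R ^ 2))
        = fun θ : ℝ => Real.sqrt ((K * fder k R)^2 * Real.cos θ ^ 2
          + (K * (II k R / Real.sinh R ^ (k+1)) / Real.sinh R)^2 * Real.sin θ ^ 2) := by
      funext θ
      rw [hDr θ, hDθ θ]
      congr 1
      field_simp
    rw [hrange, sSup_ellipse _ _ (sq_nonneg _) (sq_nonneg _), sqrt_max_sq,
      mul_max_of_nonneg _ _ (Real.exp_pos R).le]
    -- identify the two branches
    congr 1
    · simp only [abs_mul, abs_of_nonneg hKpos.le, abs_of_nonneg (Real.exp_pos R).le]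
      ring
    · have hq : 0 ≤ K * (II k R / Real.sinh R ^ (k+1)) / Real.sinh R :=
        div_nonneg (mul_nonneg hKpos.le (div_nonneg (II_nonneg k hRpos.le) (by positivity))) hs.le
      rw [abs_of_nonneg hq, pow_succ]
      field_simp
  · -- non-constant
    have h0 : v 0 0 = 0 := by
      rw [hvK]
      simp [II]
    have h1 : 0 < v 1 0 := by
      rw [hvK]
      have hII : 0 < II k 1 := by
        apply intervalIntegral.integral_pos (by norm_num) ((cont1 k).continuousOn)
        · intro x hx
          exact pow_nonneg (Real.sinh_nonneg_iff.2 hx.1.le) _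
        · exact ⟨1, by norm_num, pow_pos (Real.sinh_pos_iff.2 one_pos) _⟩
      have hs : (0:ℝ) < Real.sinh 1 := Real.sinh_pos_iff.2 one_pos
      simp only [Real.cos_zero, mul_one]
      positivity
    rw [h0]
    exact ne_of_gt h1
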